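/- The Kowalevski Hamiltonian H₁ = J₁²+J₂²+2J₃²+2a x₁ and the Kowalevski integral H₂ = (J₁²−J₂²−2a x₁)² + (2J₁J₂−2a x₂)² are in involution with respect to the Lie–Poisson bracket on e(3)*: {H₁,H₂} = 0. -/

import Mathlib

noncomputable section

/-- The Levi-Civita symbol `ε_{ijk}` on three indices. -/
def eps (i j k : Fin 3) : ℝ :=
  ((j.val : ℝ) - i.val) * ((k.val : ℝ) - j.val) * ((k.val : ℝ) - i.val) / 2

/-- Phase space e(3)* with coordinates `z = (J, x)`. -/
abbrev E3 := (Fin 3 → ℝ) × (Fin 3 → ℝ)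

/-- Partial derivative in the direction of `Jᵢ`. -/
def pJ (i : Fin 3) (f : E3 → ℝ) (z : E3) : ℝ := fderiv ℝ f z (Pi.single i 1, 0)

/-- Partial derivative in the direction of `xᵢ`. -/
def px (i : Fin 3) (f : E3 → ℝ) (z : E3) : ℝ := fderiv ℝ f z (0, Pi.single i 1)

/-- The Lie–Poisson bracket on e(3)*:
`{J_i,J_j}=ε_{ijk}J_k`, `{J_i,x_j}=ε_{ijk}x_k`, `{x_i,x_j}=0`. -/
def e3br (f g : E3 → ℝ) (z : E3) : ℝ :=
  ∑ i, ∑ j, ∑ k, eps i j k *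
    (z.1 k * pJ i f z * pJ j g z
     + z.2 k * (pJ i f z * px j g z + px i f z * pJ j g z))

def JL (i : Fin 3) : E3 →L[ℝ] ℝ :=
  (ContinuousLinearMap.proj i).comp (ContinuousLinearMap.fst ℝ (Fin 3 → ℝ) (Fin 3 → ℝ))

def xL (i : Fin 3) : E3 →L[ℝ] ℝ :=
  (ContinuousLinearMap.proj i).comp (ContinuousLinearMap.snd ℝ (Fin 3 → ℝ) (Fin 3 → ℝ))

lemma hJ (i : Fin 3) (z : E3) : HasFDerivAt (fun w : E3 => w.1 i) (JL i) z :=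
  (JL i).hasFDerivAt

lemma hx (i : Fin 3) (z : E3) : HasFDerivAt (fun w : E3 => w.2 i) (xL i) z :=
  (xL i).hasFDerivAt

lemma pJ_eq {f : E3 → ℝ} {L : E3 →L[ℝ] ℝ} {z : E3} (h : HasFDerivAt f L z) (i : Fin 3) :
    pJ i f z = L (Pi.single i 1, 0) := by rw [pJ, h.fderiv]

lemma px_eq {f : E3 → ℝ} {L : E3 →L[ℝ] ℝ} {z : E3} (h : HasFDerivAt f L z) (i : Fin 3) :
    px i f z = L (0, Pi.single i 1) := by rw [px, h.fderiv]

lemma hsq {f : E3 → ℝ} {L : E3 →L[ℝ] ℝ} {z : E3} (h : HasFDerivAt f L z) :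
    HasFDerivAt (fun w => f w ^ 2) ((2 * f z) • L) z := by
  have h2 := h.mul h
  rw [two_mul, add_smul]
  simpa only [pow_two, Pi.mul_def] using h2

set_option maxHeartbeats 2000000 in
/-- The Kowalevski Hamiltonian `H₁ = J₁²+J₂²+2J₃²+2a x₁` and the Kowalevski
integral `H₂ = (J₁²−J₂²−2a x₁)² + (2J₁J₂−2a x₂)²` are in involution with respect
to the Lie–Poisson bracket on e(3)*. -/
theorem kowalevski_involution (a : ℝ) :
    ∀ z : E3,
      e3br
        (fun w => (w.1 0) ^ 2 + (w.1 1) ^ 2 + 2 * (w.1 2) ^ 2 + 2 * a * w.2 0)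
        (fun w => ((w.1 0) ^ 2 - (w.1 1) ^ 2 - 2 * a * w.2 0) ^ 2
                  + (2 * w.1 0 * w.1 1 - 2 * a * w.2 1) ^ 2) z = 0 := by
  intro z
  have h1 := (((hsq (hJ 0 z)).add (hsq (hJ 1 z))).add ((hsq (hJ 2 z)).const_mul 2)).add
    ((hx 0 z).const_mul (2*a))
  have hA := ((hsq (hJ 0 z)).sub (hsq (hJ 1 z))).sub ((hx 0 z).const_mul (2*a))
  have hB := (((hJ 0 z).const_mul 2).mul (hJ 1 z)).sub ((hx 1 z).const_mul (2*a))
  have h2 := (hsq hA).add (hsq hB)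
  simp only [Pi.add_def, Pi.sub_def, Pi.mul_def] at h1 h2
  simp only [e3br, pJ_eq h1, pJ_eq h2, px_eq h1, px_eq h2, Fin.sum_univ_three]
  simp only [ContinuousLinearMap.add_apply, ContinuousLinearMap.smul_apply,
    ContinuousLinearMap.sub_apply, ContinuousLinearMap.comp_apply,
    ContinuousLinearMap.coe_fst', ContinuousLinearMap.coe_snd',
    ContinuousLinearMap.proj_apply, JL, xL, smul_eq_mul, Pi.single_apply,
    Fin.reduceEq, reduceIte, mul_zero, zero_mul, mul_one, one_mul, add_zero, zero_add,
    sub_zero, zero_sub, neg_zero]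
  norm_num [eps]
  ring
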